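/- Let L be a finite lattice, D a finite distributive lattice, and γ: Prime(L) → J(D) a coloring (J(D) carrying the order of D). Let μ: J(Con(L)) → J(D) be the induced order isomorphism con(p) ↦ γ(p), and let φ: Con(L) → D be the unique lattice isomorphism extending μ. Then for every x ∈ D: x ∈ φ(Princ(L)) if and only if there exists a chain u₀ ≺ u₁ ≺ ⋯ ≺ uₙ in L (n ≥ 0) such that x = γ([u₀,u₁]) ∨ ⋯ ∨ γ([u_{n−1},u_n]) (the empty join, for n = 0, being 0). -/

import Mathlib

/-- A congruence of a lattice: an equivalence relation compatible with join and meet. -/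
structure LatCon (L : Type*) [Lattice L] where
  r : L → L → Prop
  refl' : ∀ x, r x x
  symm' : ∀ {x y}, r x y → r y x
  trans' : ∀ {x y z}, r x y → r y z → r x z
  supCompat' : ∀ {a b c d}, r a b → r c d → r (a ⊔ c) (b ⊔ d)
  infCompat' : ∀ {a b c d}, r a b → r c d → r (a ⊓ c) (b ⊓ d)

namespace LatCon

variable {L : Type*} [Lattice L]

theorem ext' {θ ψ : LatCon L} (h : θ.r = ψ.r) : θ = ψ := by
  cases θ; cases ψ; cases h; rfl

/-- Congruences ordered by inclusion. -/
instance : PartialOrder (LatCon L) where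
  le θ ψ := ∀ ⦃x y⦄, θ.r x y → ψ.r x y
  le_refl _ _ _ h := h
  le_trans _ _ _ h h' _ _ hxy := h' (h hxy)
  le_antisymm θ ψ h h' :=
    ext' (by funext x y; exact propext ⟨fun hh => h hh, fun hh => h' hh⟩)

end LatCon

/-- `latConGen x y`: the smallest congruence collapsing `x` and `y`. -/
def latConGen {L : Type*} [Lattice L] (x y : L) : LatCon L where
  r a b := ∀ θ : LatCon L, θ.r x y → θ.r a b
  refl' a _ _ := LatCon.refl' _ a
  symm' h θ hθ := θ.symm' (h θ hθ)
  trans' h h' θ hθ := θ.trans' (h θ hθ) (h' θ hθ)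
  supCompat' h h' θ hθ := θ.supCompat' (h θ hθ) (h' θ hθ)
  infCompat' h h' θ hθ := θ.infCompat' (h θ hθ) (h' θ hθ)

/-- The set of principal congruences of a lattice. -/
def Princ (L : Type*) [Lattice L] : Set (LatCon L) :=
  {θ | ∃ x y : L, x ≤ y ∧ θ = latConGen x y}

/-- The prime intervals (covering pairs) of an ordered set. -/
def PrimeInt (L : Type*) [Preorder L] : Type _ := {p : L × L // p.1 ⋖ p.2}

/-- The congruence generated by a prime interval. -/
def primeCon {L : Type*} [Lattice L] (p : PrimeInt L) : LatCon L :=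
  latConGen p.val.1 p.val.2

section Aux

variable {L : Type*} [Lattice L]

lemma latConGen_r_self (x y : L) : (latConGen x y).r x y := fun _ h => h

lemma latConGen_le {x y : L} {θ : LatCon L} (h : θ.r x y) : latConGen x y ≤ θ :=
  fun _ _ hab => hab θ h

lemma LatCon.sandwich {θ : LatCon L} {a b x y : L} (h : θ.r a b)
    (hax : a ≤ x) (hxy : x ≤ y) (hyb : y ≤ b) : θ.r x y := by
  have h1 := θ.supCompat' h (θ.refl' x)
  rw [sup_eq_right.2 hax, sup_eq_left.2 (hxy.trans hyb)] at h1
  have h2 := θ.infCompat' h1 (θ.refl' y)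
  rw [inf_eq_left.2 hxy, inf_eq_right.2 hyb] at h2
  exact h2

lemma LatCon.chain_trans {θ : LatCon L} {n : ℕ} {u : Fin (n + 1) → L}
    (hstep : ∀ i : Fin n, θ.r (u i.castSucc) (u i.succ)) :
    θ.r (u 0) (u (Fin.last n)) := by
  have : ∀ k : Fin (n + 1), θ.r (u 0) (u k) := by
    intro k
    induction k using Fin.induction with
    | zero => exact θ.refl' _
    | succ i hi => exact θ.trans' hi (hstep i)
  exact this (Fin.last n)

/-- Existence of a maximal (covering) chain between comparable elements
in a finite partial order. -/
lemma exists_cov_chain {L : Type*} [PartialOrder L] [Finite L] :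
    ∀ a b : L, a ≤ b → ∃ (n : ℕ) (u : Fin (n + 1) → L),
      u 0 = a ∧ u (Fin.last n) = b ∧ ∀ i : Fin n, u i.castSucc ⋖ u i.succ := by
  intro a
  induction a using IsWellFounded.induction (r := (· > · : L → L → Prop)) with
  | _ a ih =>
    intro b hab
    rcases eq_or_lt_of_le hab with rfl | hlt
    · exact ⟨0, fun _ => a, rfl, rfl, fun i => i.elim0⟩
    · obtain ⟨c, hcb, hmin⟩ := exists_minimal_le_of_wellFoundedLT (fun z => a < z) b hlt
      have hcov : a ⋖ c := ⟨hmin.1, fun z haz hzc => hzc.not_ge (hmin.2 haz hzc.le)⟩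
      obtain ⟨n, u, hu0, hul, hc⟩ := ih c hcov.lt b hcb
      refine ⟨n + 1, Fin.cons a u, rfl, ?_, ?_⟩
      · rw [← Fin.succ_last, Fin.cons_succ]; exact hul
      · intro i
        induction i using Fin.cases with
        | zero => simpa [hu0, Fin.succ_zero_eq_one] using hcov
        | succ j =>
          have h1 : (Fin.succ j).castSucc = (j.castSucc).succ := by
            simp [Fin.ext_iff]
          have h2 : (Fin.succ j).succ = (j.succ).succ := rfl
          rw [h1, h2, Fin.cons_succ, Fin.cons_succ]
          exact hc j

/-- Key computation: the image under `φ` of the congruence generated by the endpoints of a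
covering chain is the join of the colors of its prime intervals. -/
lemma phi_latConGen_chain {L : Type} [Lattice L]
    {D : Type} [DistribLattice D] [Fintype D] [BoundedOrder D]
    (γ : PrimeInt L → {d : D // SupIrred d})
    (φ : LatCon L ≃o D)
    (hφ : ∀ p : PrimeInt L, φ (primeCon p) = (γ p : D))
    {n : ℕ} (u : Fin (n + 1) → L)
    (hc : ∀ i : Fin n, u i.castSucc ⋖ u i.succ) :
    φ (latConGen (u 0) (u (Fin.last n))) =
      Finset.univ.sup (fun i : Fin n => (γ ⟨(u i.castSucc, u i.succ), hc i⟩ : D)) := by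
  have hmono : Monotone u :=
    (Fin.strictMono_iff_lt_succ.2 fun i => (hc i).lt).monotone
  set s : D := Finset.univ.sup
    (fun i : Fin n => (γ ⟨(u i.castSucc, u i.succ), hc i⟩ : D)) with hs
  apply le_antisymm
  · have hle : latConGen (u 0) (u (Fin.last n)) ≤ φ.symm s := by
      apply latConGen_le
      apply LatCon.chain_trans
      intro i
      have h1 : (γ ⟨(u i.castSucc, u i.succ), hc i⟩ : D) ≤ s := by
        rw [hs]
        exact Finset.le_sup (f := fun i : Fin n => (γ ⟨(u i.castSucc, u i.succ), hc i⟩ : D))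
          (Finset.mem_univ i)
      have h2 : primeCon ⟨(u i.castSucc, u i.succ), hc i⟩ ≤ φ.symm s := by
        rw [← φ.symm_apply_apply (primeCon ⟨(u i.castSucc, u i.succ), hc i⟩)]
        exact φ.symm.monotone ((hφ _).trans_le h1)
      exact h2 (latConGen_r_self _ _)
    calc φ (latConGen (u 0) (u (Fin.last n))) ≤ φ (φ.symm s) := φ.monotone hle
      _ = s := φ.apply_symm_apply s
  · apply Finset.sup_le
    intro i _
    rw [← hφ ⟨(u i.castSucc, u i.succ), hc i⟩]
    apply φ.monotone
    apply latConGen_le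
    exact LatCon.sandwich (latConGen_r_self (u 0) (u (Fin.last n)))
      (hmono (Fin.zero_le _)) (hc i).le (hmono (Fin.le_last _))

end Aux

theorem mem_image_princ_iff_join_of_chain_colors
    (L : Type) [Lattice L] [Fintype L]
    (D : Type) [DistribLattice D] [Fintype D] [BoundedOrder D]
    (γ : PrimeInt L → {d : D // SupIrred d})
    (hsurj : Function.Surjective γ)
    (hcol₁ : ∀ p q : PrimeInt L, (γ q : D) ≤ (γ p : D) → primeCon q ≤ primeCon p)
    (hcol₂ : ∀ p q : PrimeInt L, primeCon q ≤ primeCon p → (γ q : D) ≤ (γ p : D))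
    (φ : LatCon L ≃o D)
    (hφ : ∀ p : PrimeInt L, φ (primeCon p) = (γ p : D)) :
    ∀ x : D, x ∈ φ '' Princ L ↔
      ∃ (n : ℕ) (u : Fin (n + 1) → L) (hc : ∀ i : Fin n, u i.castSucc ⋖ u i.succ),
        x = Finset.univ.sup fun i : Fin n =>
          (γ ⟨(u i.castSucc, u i.succ), hc i⟩ : D) := by
  intro x
  constructor
  · rintro ⟨θ, ⟨a, b, hab, rfl⟩, rfl⟩
    obtain ⟨n, u, hu0, hul, hc⟩ := exists_cov_chain a b hab
    refine ⟨n, u, hc, ?_⟩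
    rw [← hu0, ← hul]
    exact phi_latConGen_chain γ φ hφ u hc
  · rintro ⟨n, u, hc, rfl⟩
    have hmono : Monotone u :=
      (Fin.strictMono_iff_lt_succ.2 fun i => (hc i).lt).monotone
    exact ⟨latConGen (u 0) (u (Fin.last n)),
      ⟨u 0, u (Fin.last n), hmono (Fin.zero_le _), rfl⟩,
      phi_latConGen_chain γ φ hφ u hc⟩
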